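/- Let Ω ⊆ 𝔽ⁿ. The following are equivalent: (1) I(Ω) is a two-sided ideal of R; (2) if F ∈ I(Ω) and c ∈ 𝔽, then Fc ∈ I(Ω); (3) if a ∈ Ω̄, then a^c ∈ Ω̄ for all c ∈ 𝔽 ∖ {0}; (4) if a ∈ Ω, then a^c ∈ Ω̄ for all c ∈ 𝔽 ∖ {0}. In particular, I(𝔽ⁿ) is a two-sided ideal of R. -/

import Mathlib

/- Common setup: free multivariate skew polynomial rings over a division ring. -/

open Matrix Finsupp

/-- The underlying left `𝔽`-module of the free multivariate skew polynomial ring: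
the free left `𝔽`-module with basis the free monoid on `n` symbols. -/
abbrev SkewPoly (𝔽 : Type*) [DivisionRing 𝔽] (n : ℕ) : Type _ := FreeMonoid (Fin n) →₀ 𝔽

namespace SkewPoly

variable {𝔽 : Type*} [DivisionRing 𝔽] {n : ℕ}

/-- The variable `xᵢ` as a skew polynomial. -/
noncomputable def X (𝔽 : Type*) [DivisionRing 𝔽] {n : ℕ} (i : Fin n) : SkewPoly 𝔽 n :=
  Finsupp.single (FreeMonoid.of i) 1

/-- The constant `a` as a skew polynomial (coefficient on the empty word). -/
noncomputable def C {𝔽 : Type*} [DivisionRing 𝔽] (n : ℕ) (a : 𝔽) :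
    SkewPoly 𝔽 n := Finsupp.single 1 a

/-- The degree of a skew polynomial: the maximal length of a word in its support
(`⊥` for the zero polynomial). -/
noncomputable def deg (F : SkewPoly 𝔽 n) : WithBot ℕ :=
  F.support.sup fun m => ((FreeMonoid.length m : ℕ) : WithBot ℕ)

/-- A matrix morphism `σ : 𝔽 → Mₙ(𝔽)`: a unital ring homomorphism. -/
def IsMatrixMorphism (σ : 𝔽 → Matrix (Fin n) (Fin n) 𝔽) : Prop :=
  σ 1 = 1 ∧ (∀ a b : 𝔽, σ (a + b) = σ a + σ b) ∧ (∀ a b : 𝔽, σ (a * b) = σ a * σ b)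

/-- A `σ`-vector derivation `δ : 𝔽 → 𝔽ⁿ`: additive with `δ(ab) = σ(a)δ(b) + δ(a)b`. -/
def IsVectorDerivation (σ : 𝔽 → Matrix (Fin n) (Fin n) 𝔽) (δ : 𝔽 → Fin n → 𝔽) : Prop :=
  (∀ a b : 𝔽, δ (a + b) = δ a + δ b) ∧
    (∀ a b : 𝔽, δ (a * b) = σ a *ᵥ δ b + fun i => δ a i * b)

/-- A multiplication on the free module `SkewPoly 𝔽 n` making it a ring (with the
existing addition) whose identity is the empty word, which restricts to concatenation
on monomials, is additive on degrees of nonzero elements, and for which left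
multiplication by constants is scalar multiplication. -/
structure RawMul (𝔽 : Type*) [DivisionRing 𝔽] (n : ℕ) where
  /-- the multiplication -/
  mul : SkewPoly 𝔽 n → SkewPoly 𝔽 n → SkewPoly 𝔽 n
  mul_add : ∀ F G H : SkewPoly 𝔽 n, mul F (G + H) = mul F G + mul F H
  add_mul : ∀ F G H : SkewPoly 𝔽 n, mul (F + G) H = mul F H + mul G H
  mul_assoc : ∀ F G H : SkewPoly 𝔽 n, mul (mul F G) H = mul F (mul G H)
  one_mul : ∀ F : SkewPoly 𝔽 n, mul (C n 1) F = F
  mul_one : ∀ F : SkewPoly 𝔽 n, mul F (C n 1) = F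
  mono_mul_mono : ∀ m m' : FreeMonoid (Fin n),
    mul (Finsupp.single m 1) (Finsupp.single m' 1) = Finsupp.single (m * m') 1
  const_mul : ∀ (a : 𝔽) (F : SkewPoly 𝔽 n), mul (C n a) F = a • F
  deg_mul : ∀ F G : SkewPoly 𝔽 n, F ≠ 0 → G ≠ 0 → deg (mul F G) = deg F + deg G

/-- The multiplication `S` satisfies the commutation rule
`xᵢ a = Σⱼ σ_{i,j}(a) xⱼ + δᵢ(a)`. -/
def HasCommRule (S : RawMul 𝔽 n) (σ : 𝔽 → Matrix (Fin n) (Fin n) 𝔽)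
    (δ : 𝔽 → Fin n → 𝔽) : Prop :=
  ∀ (i : Fin n) (a : 𝔽),
    S.mul (X 𝔽 i) (C n a) =
      (∑ j : Fin n, Finsupp.single (FreeMonoid.of j) (σ a i j)) + C n (δ a i)

/-- `F = Σᵢ Gᵢ (xᵢ - aᵢ) + b`, i.e. `b` is a remainder of `F` upon right division
by `x₁ - a₁, …, xₙ - aₙ`; equivalently `F - b` lies in the left ideal generated by
the `xᵢ - aᵢ`. -/
def Decomposes (S : RawMul 𝔽 n) (a : Fin n → 𝔽) (F : SkewPoly 𝔽 n) (b : 𝔽) : Prop :=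
  ∃ G : Fin n → SkewPoly 𝔽 n,
    F = (∑ i : Fin n, S.mul (G i) (X 𝔽 i - C n (a i))) + C n b

/-- The evaluation of `F` at the point `a`: the unique `b ∈ 𝔽` such that `F - b`
lies in the left ideal generated by `x₁ - a₁, …, xₙ - aₙ`. -/
noncomputable def eval (S : RawMul 𝔽 n) (a : Fin n → 𝔽) (F : SkewPoly 𝔽 n) : 𝔽 :=
  letI := Classical.propDecidable (∃ b : 𝔽, Decomposes S a F b)
  if h : ∃ b : 𝔽, Decomposes S a F b then h.choose else 0

/-- The `(σ,δ)`-conjugate `a^c = σ(c) a c⁻¹ + δ(c) c⁻¹` of `a` with respect to `c`. -/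
noncomputable def conj (σ : 𝔽 → Matrix (Fin n) (Fin n) 𝔽) (δ : 𝔽 → Fin n → 𝔽)
    (a : Fin n → 𝔽) (c : 𝔽) : Fin n → 𝔽 :=
  fun i => (σ c *ᵥ a) i * c⁻¹ + δ c i * c⁻¹

/-- `I(Ω)`: the set of skew polynomials vanishing at every point of `Ω`. -/
def zeroIdeal (S : RawMul 𝔽 n) (Ω : Set (Fin n → 𝔽)) : Set (SkewPoly 𝔽 n) :=
  {F | ∀ a ∈ Ω, eval S a F = 0}

/-- The left ideal of `SkewPoly 𝔽 n` generated by `x₁ - a₁, …, xₙ - aₙ`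
(the set of sums of left multiples of the generators). -/
def pointIdeal (S : RawMul 𝔽 n) (a : Fin n → 𝔽) : Set (SkewPoly 𝔽 n) :=
  {F | ∃ G : Fin n → SkewPoly 𝔽 n, F = ∑ i : Fin n, S.mul (G i) (X 𝔽 i - C n (a i))}

/-- The P-closure `Ω̄ = Z(I(Ω))` of a set of points `Ω`. -/
def pClosure (S : RawMul 𝔽 n) (Ω : Set (Fin n → 𝔽)) : Set (Fin n → 𝔽) :=
  {a | ∀ F ∈ zeroIdeal S Ω, eval S a F = 0}

/-- `Ω` is P-closed if it equals its P-closure. -/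
def IsPClosed (S : RawMul 𝔽 n) (Ω : Set (Fin n → 𝔽)) : Prop := pClosure S Ω = Ω

/-- `B` is P-independent: no point of `B` lies in the P-closure of the rest. -/
def PIndep (S : RawMul 𝔽 n) (B : Set (Fin n → 𝔽)) : Prop :=
  ∀ a ∈ B, a ∉ pClosure S (B \ {a})

/-- `B` is a P-basis of `Ω`: a P-independent subset of `Ω` whose P-closure is `Ω`. -/
def IsPBasis (S : RawMul 𝔽 n) (B Ω : Set (Fin n → 𝔽)) : Prop :=
  B ⊆ Ω ∧ PIndep S B ∧ pClosure S B = Ω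

/-- `Ω` is finitely generated: it is the P-closure of a finite subset of itself. -/
def FinGen (S : RawMul 𝔽 n) (Ω : Set (Fin n → 𝔽)) : Prop :=
  ∃ G : Set (Fin n → 𝔽), G.Finite ∧ G ⊆ Ω ∧ pClosure S G = Ω

/-- The rank of a P-closed set: the (common) cardinality of its P-bases. -/
noncomputable def pRank (S : RawMul 𝔽 n) (Ω : Set (Fin n → 𝔽)) : ℕ :=
  sInf {k : ℕ | ∃ B : Finset (Fin n → 𝔽), IsPBasis S ↑B Ω ∧ B.card = k}

/-- The image of the evaluation map `E_Ω : R → 𝔽^Ω`, as a left `𝔽`-subspace of `𝔽^Ω`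
(the span of the image; the image is itself a subspace since evaluation is left linear). -/
noncomputable def evalSpan (S : RawMul 𝔽 n) (Ω : Set (Fin n → 𝔽)) :
    Submodule 𝔽 (↥Ω → 𝔽) :=
  Submodule.span 𝔽 (Set.range fun F : SkewPoly 𝔽 n => fun a : ↥Ω => eval S ↑a F)

/-- `I` is a two-sided ideal with respect to the multiplication `S`. -/
def IsTwoSidedIdealSet (S : RawMul 𝔽 n) (I : Set (SkewPoly 𝔽 n)) : Prop :=
  (0 : SkewPoly 𝔽 n) ∈ I ∧ (∀ F ∈ I, ∀ G ∈ I, F + G ∈ I) ∧ (∀ F ∈ I, -F ∈ I) ∧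
    (∀ F ∈ I, ∀ G : SkewPoly 𝔽 n, S.mul G F ∈ I) ∧
    (∀ F ∈ I, ∀ G : SkewPoly 𝔽 n, S.mul F G ∈ I)


/-- The left row-rank of the skew Vandermonde matrix `V_d(G)`: the dimension of the
left `𝔽`-span of its rows `(N_m(c))_{c ∈ G}`, indexed by the words `m` of length `< d`,
where `N_m(c)` is the evaluation of the monomial `m` at the point `c`. -/
noncomputable def vandermondeRank (S : RawMul 𝔽 n) (G : Finset (Fin n → 𝔽)) (d : ℕ) :
    Cardinal :=
  Module.rank 𝔽 ↥(Submodule.span 𝔽 (Set.range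
    fun m : {m : FreeMonoid (Fin n) // FreeMonoid.length m < d} =>
      fun c : ↥G => eval S ↑c (Finsupp.single (m : FreeMonoid (Fin n)) (1 : 𝔽))))

section Helpers

variable {𝔽 : Type*} [DivisionRing 𝔽] {n : ℕ} (S : RawMul 𝔽 n)

lemma C_zero : C n (0 : 𝔽) = 0 := Finsupp.single_zero 1

lemma C_add (a b : 𝔽) : C n (a + b) = C n a + C n b := Finsupp.single_add 1 a b

lemma smul_C (g a : 𝔽) : g • C n a = C n (g * a) := by
  simp [C, Finsupp.smul_single]

lemma C_sum {ι : Type*} (s : Finset ι) (f : ι → 𝔽) :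
    C n (∑ i ∈ s, f i) = ∑ i ∈ s, C n (f i) :=
  map_sum (Finsupp.singleAddHom (1 : FreeMonoid (Fin n))) f s

lemma mulZero (F : SkewPoly 𝔽 n) : S.mul F 0 = 0 := by
  have h := S.mul_add F 0 0
  rw [add_zero] at h
  exact left_eq_add.mp h

lemma zeroMul (F : SkewPoly 𝔽 n) : S.mul 0 F = 0 := by
  have h := S.add_mul 0 0 F
  rw [add_zero] at h
  exact left_eq_add.mp h

lemma mulNeg (F G : SkewPoly 𝔽 n) : S.mul F (-G) = -(S.mul F G) := by
  have h := S.mul_add F G (-G)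
  rw [add_neg_cancel, mulZero] at h
  exact (eq_neg_of_add_eq_zero_right h.symm)

lemma negMul (F G : SkewPoly 𝔽 n) : S.mul (-F) G = -(S.mul F G) := by
  have h := S.add_mul F (-F) G
  rw [add_neg_cancel, zeroMul] at h
  exact (eq_neg_of_add_eq_zero_right h.symm)

lemma mulSub (F G H : SkewPoly 𝔽 n) : S.mul F (G - H) = S.mul F G - S.mul F H := by
  rw [sub_eq_add_neg, S.mul_add, mulNeg, sub_eq_add_neg]

lemma subMul (F G H : SkewPoly 𝔽 n) : S.mul (F - G) H = S.mul F H - S.mul G H := by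
  rw [sub_eq_add_neg, S.add_mul, negMul, sub_eq_add_neg]

lemma smulMul (g : 𝔽) (F G : SkewPoly 𝔽 n) : S.mul (g • F) G = g • S.mul F G := by
  rw [← S.const_mul, ← S.const_mul, S.mul_assoc]

lemma CmulC (a b : 𝔽) : S.mul (C n a) (C n b) = C n (a * b) := by
  rw [S.const_mul, smul_C]

lemma single_eq_smul (m : FreeMonoid (Fin n)) (g : 𝔽) :
    (Finsupp.single m g : SkewPoly 𝔽 n) = g • Finsupp.single m 1 := by
  rw [Finsupp.smul_single, smul_eq_mul, mul_one]

lemma mulSum {ι : Type*} (s : Finset ι) (F : SkewPoly 𝔽 n) (G : ι → SkewPoly 𝔽 n) :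
    S.mul F (∑ i ∈ s, G i) = ∑ i ∈ s, S.mul F (G i) := by
  classical
  induction s using Finset.induction with
  | empty => simp [mulZero]
  | insert _ _ h ih => rw [Finset.sum_insert h, Finset.sum_insert h, S.mul_add, ih]

lemma sumMul {ι : Type*} (s : Finset ι) (F : SkewPoly 𝔽 n) (G : ι → SkewPoly 𝔽 n) :
    S.mul (∑ i ∈ s, G i) F = ∑ i ∈ s, S.mul (G i) F := by
  classical
  induction s using Finset.induction with
  | empty => simp [zeroMul]
  | insert _ _ h ih => rw [Finset.sum_insert h, Finset.sum_insert h, S.add_mul, ih]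

lemma mul_X_eq (F : SkewPoly 𝔽 n) (i : Fin n) :
    S.mul F (X 𝔽 i) = Finsupp.mapDomain (· * FreeMonoid.of i) F := by
  induction F using Finsupp.induction with
  | zero => rw [zeroMul, Finsupp.mapDomain_zero]
  | single_add m g F hm hg ih =>
      rw [S.add_mul, ih, Finsupp.mapDomain_add, Finsupp.mapDomain_single,
        single_eq_smul, smulMul]
      show _ • S.mul (Finsupp.single m 1) (Finsupp.single (FreeMonoid.of i) 1) + _ = _
      rw [S.mono_mul_mono, ← single_eq_smul]

lemma coeff_eq_zero_of_deg_lt {F : SkewPoly 𝔽 n} {w : FreeMonoid (Fin n)}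
    (h : deg F < (FreeMonoid.length w : WithBot ℕ)) : F w = 0 := by
  by_contra hw
  exact absurd (Finset.le_sup (f := fun m => ((FreeMonoid.length m : ℕ) : WithBot ℕ))
    (Finsupp.mem_support_iff.mpr hw)) (not_le.mpr h)

lemma deg_C {a : 𝔽} (h : a ≠ 0) : deg (C n a : SkewPoly 𝔽 n) = 0 := by
  rw [deg, C, Finsupp.support_single_ne_zero _ h, Finset.sup_singleton,
    FreeMonoid.length_one, Nat.cast_zero]

end Helpers
section Helpers2

variable {𝔽 : Type*} [DivisionRing 𝔽] {n : ℕ} (S : RawMul 𝔽 n)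
variable {σ : 𝔽 → Matrix (Fin n) (Fin n) 𝔽} {δ : 𝔽 → Fin n → 𝔽}

lemma decomposes_C (a : Fin n → 𝔽) (b : 𝔽) : Decomposes S a (C n b) b :=
  ⟨0, by simp [zeroMul]⟩

lemma decomposes_zero (a : Fin n → 𝔽) : Decomposes S a 0 0 :=
  ⟨0, by simp [zeroMul, C_zero]⟩

lemma decomposes_sum_pt (a : Fin n → 𝔽) (G : Fin n → SkewPoly 𝔽 n) :
    Decomposes S a (∑ i : Fin n, S.mul (G i) (X 𝔽 i - C n (a i))) 0 :=
  ⟨G, by rw [C_zero, add_zero]⟩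

lemma Decomposes.add {a : Fin n → 𝔽} {F F' : SkewPoly 𝔽 n} {b b' : 𝔽}
    (h : Decomposes S a F b) (h' : Decomposes S a F' b') :
    Decomposes S a (F + F') (b + b') := by
  obtain ⟨G, rfl⟩ := h; obtain ⟨G', rfl⟩ := h'
  refine ⟨G + G', ?_⟩
  rw [C_add]
  simp only [Pi.add_apply, S.add_mul, Finset.sum_add_distrib]
  abel

lemma Decomposes.smul {a : Fin n → 𝔽} {F : SkewPoly 𝔽 n} {b : 𝔽} (g : 𝔽)
    (h : Decomposes S a F b) : Decomposes S a (g • F) (g * b) := by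
  obtain ⟨G, rfl⟩ := h
  refine ⟨fun i => g • G i, ?_⟩
  rw [smul_add, Finset.smul_sum, smul_C]
  simp only [smulMul]

lemma Decomposes.neg {a : Fin n → 𝔽} {F : SkewPoly 𝔽 n} {b : 𝔽}
    (h : Decomposes S a F b) : Decomposes S a (-F) (-b) := by
  have h2 := h.smul S (-1)
  simpa using h2

lemma decomposes_sum_ne {a : Fin n → 𝔽} {G : Fin n → SkewPoly 𝔽 n} {b : 𝔽}
    (h : (∑ i : Fin n, S.mul (G i) (X 𝔽 i - C n (a i))) = C n b) : b = 0 := by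
  classical
  by_cases hG : ∀ j, G j = 0
  · have h0 : (C n b : SkewPoly 𝔽 n) = 0 := by
      rw [← h]
      exact Finset.sum_eq_zero fun i _ => by rw [hG i, zeroMul]
    exact Finsupp.single_eq_zero.mp h0
  · exfalso
    push_neg at hG
    obtain ⟨j₁, hj₁⟩ := hG
    set P : Finset ((_ : Fin n) × FreeMonoid (Fin n)) :=
      Finset.univ.sigma (fun j => (G j).support) with hP
    have hPne : P.Nonempty := by
      obtain ⟨m, hm⟩ := Finsupp.support_nonempty_iff.mpr hj₁
      exact ⟨⟨j₁, m⟩, Finset.mem_sigma.mpr ⟨Finset.mem_univ _, hm⟩⟩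
    obtain ⟨p, hp, hpmax⟩ := P.exists_max_image (fun q => FreeMonoid.length q.2) hPne
    obtain ⟨j₀, m₀⟩ := p
    have hm₀ : m₀ ∈ (G j₀).support := (Finset.mem_sigma.mp hp).2
    have hlen : ∀ j, ∀ m ∈ (G j).support, FreeMonoid.length m ≤ FreeMonoid.length m₀ :=
      fun j m hm => hpmax ⟨j, m⟩ (Finset.mem_sigma.mpr ⟨Finset.mem_univ _, hm⟩)
    set w : FreeMonoid (Fin n) := m₀ * FreeMonoid.of j₀ with hw
    have hlw : FreeMonoid.length w = FreeMonoid.length m₀ + 1 := by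
      rw [hw, FreeMonoid.length_mul, FreeMonoid.length_of]
    -- coefficient of w on the right side
    have hR : (C n b : SkewPoly 𝔽 n) w = 0 := by
      refine Finsupp.single_eq_of_ne ?_
      intro h1
      have := hlw
      rw [h1, FreeMonoid.length_one] at this
      omega
    -- coefficient of w of each term
    have hterm2 : ∀ i : Fin n, (S.mul (G i) (C n (a i))) w = 0 := by
      intro i
      by_cases hGi : G i = 0
      · rw [hGi, zeroMul]; rfl
      by_cases hai : a i = 0
      · rw [hai, C_zero, mulZero]; rfl
      refine coeff_eq_zero_of_deg_lt ?_
      rw [S.deg_mul _ _ hGi (by simp [C, Finsupp.single_eq_zero, hai]),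
        deg_C hai, add_zero]
      have h1 : deg (G i) ≤ ((FreeMonoid.length m₀ : ℕ) : WithBot ℕ) :=
        Finset.sup_le fun m hm => Nat.cast_le.mpr (hlen i m hm)
      refine lt_of_le_of_lt h1 ?_
      rw [hlw]
      exact_mod_cast Nat.lt_succ_self _
    have hterm1 : ∀ i : Fin n, i ≠ j₀ →
        (Finsupp.mapDomain (· * FreeMonoid.of i) (G i)) w = 0 := by
      intro i hi
      refine Finsupp.mapDomain_notin_range _ _ ?_
      rintro ⟨m, hm⟩
      apply hi
      have : m.toList ++ [i] = m₀.toList ++ [j₀] := congrArg FreeMonoid.toList hm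
      rw [← List.concat_eq_append, ← List.concat_eq_append] at this
      exact (List.concat_inj.mp this).2
    have hmain : (∑ i : Fin n, S.mul (G i) (X 𝔽 i - C n (a i))) w = G j₀ m₀ := by
      rw [Finsupp.finset_sum_apply]
      have : ∀ i : Fin n, (S.mul (G i) (X 𝔽 i - C n (a i))) w
          = (Finsupp.mapDomain (· * FreeMonoid.of i) (G i)) w - (S.mul (G i) (C n (a i))) w := by
        intro i
        rw [mulSub, ← mul_X_eq, Finsupp.sub_apply]
      rw [Finset.sum_congr rfl fun i _ => this i]
      rw [Finset.sum_congr rfl fun i (_ : i ∈ Finset.univ) => by rw [hterm2 i, sub_zero]]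
      rw [Finset.sum_eq_single j₀ (fun i _ hi => hterm1 i hi) (by simp)]
      rw [hw, Finsupp.mapDomain_apply (mul_left_injective _)]
    rw [h, hR] at hmain
    exact Finsupp.mem_support_iff.mp hm₀ hmain.symm

lemma Decomposes.unique {a : Fin n → 𝔽} {F : SkewPoly 𝔽 n} {b b' : 𝔽}
    (h : Decomposes S a F b) (h' : Decomposes S a F b') : b = b' := by
  obtain ⟨G, hG⟩ := h; obtain ⟨G', hG'⟩ := h'
  have key : (∑ i : Fin n, S.mul ((G - G') i) (X 𝔽 i - C n (a i))) = C n (b' - b) := by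
    have h2 := hG.symm.trans hG'
    simp only [Pi.sub_apply, subMul, Finset.sum_sub_distrib]
    have : C n (b' - b) = C n b' - C n b := by
      rw [sub_eq_add_neg, sub_eq_add_neg, C_add]
      congr 1
      exact Finsupp.single_neg 1 b
    rw [this]
    rw [sub_eq_sub_iff_add_eq_add]
    linear_combination (norm := abel) h2
  have h0 := decomposes_sum_ne S key
  exact (sub_eq_zero.mp h0).symm

end Helpers2
section Helpers3

variable {𝔽 : Type*} [DivisionRing 𝔽] {n : ℕ} (S : RawMul 𝔽 n)
variable {σ : 𝔽 → Matrix (Fin n) (Fin n) 𝔽} {δ : 𝔽 → Fin n → 𝔽}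

lemma Decomposes.X_mul (hS : HasCommRule S σ δ) {a : Fin n → 𝔽} {F : SkewPoly 𝔽 n} {b : 𝔽}
    (i : Fin n) (h : Decomposes S a F b) :
    Decomposes S a (S.mul (X 𝔽 i) F) ((σ b *ᵥ a) i + δ b i) := by
  obtain ⟨G, rfl⟩ := h
  refine ⟨fun j => S.mul (X 𝔽 i) (G j) + C n (σ b i j), ?_⟩
  rw [S.mul_add, mulSum]
  have h1 : ∀ j : Fin n, S.mul (X 𝔽 i) (S.mul (G j) (X 𝔽 j - C n (a j)))
      = S.mul (S.mul (X 𝔽 i) (G j)) (X 𝔽 j - C n (a j)) := fun j => (S.mul_assoc _ _ _).symm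
  have h3 : ∀ j : Fin n, (Finsupp.single (FreeMonoid.of j) (σ b i j) : SkewPoly 𝔽 n)
      = S.mul (C n (σ b i j)) (X 𝔽 j - C n (a j)) + C n (σ b i j * a j) := by
    intro j
    rw [S.const_mul, smul_sub, smul_C]
    rw [X, single_eq_smul]
    abel
  have h2 : S.mul (X 𝔽 i) (C n b)
      = ∑ j : Fin n, S.mul (C n (σ b i j)) (X 𝔽 j - C n (a j)) + C n ((σ b *ᵥ a) i + δ b i) := by
    rw [hS i b, Finset.sum_congr rfl fun j _ => h3 j, Finset.sum_add_distrib, ← C_sum]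
    have : (σ b *ᵥ a) i = ∑ j : Fin n, σ b i j * a j := by
      simp [Matrix.mulVec, dotProduct]
    rw [this, C_add]
    abel
  rw [Finset.sum_congr rfl fun j _ => h1 j, h2]
  simp only [S.add_mul, Finset.sum_add_distrib]
  abel

lemma exists_decomposes (hS : HasCommRule S σ δ) (a : Fin n → 𝔽) (F : SkewPoly 𝔽 n) :
    ∃ b, Decomposes S a F b := by
  have hmono : ∀ m : FreeMonoid (Fin n), ∃ b, Decomposes S a (Finsupp.single m 1) b := by
    intro m
    induction m using FreeMonoid.recOn with
    | one => exact ⟨1, decomposes_C S a 1⟩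
    | of_mul x xs ih =>
        obtain ⟨b, hb⟩ := ih
        have hx : (Finsupp.single (FreeMonoid.of x * xs) 1 : SkewPoly 𝔽 n)
            = S.mul (X 𝔽 x) (Finsupp.single xs 1) := (S.mono_mul_mono _ _).symm
        rw [hx]
        exact ⟨_, hb.X_mul S hS x⟩
  induction F using Finsupp.induction with
  | zero => exact ⟨0, decomposes_zero S a⟩
  | single_add m g F hm hg ih =>
      obtain ⟨b, hb⟩ := ih
      obtain ⟨b', hb'⟩ := hmono m
      refine ⟨g * b' + b, ?_⟩
      rw [single_eq_smul]
      exact (hb'.smul S g).add S hb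

lemma eval_spec (hS : HasCommRule S σ δ) (a : Fin n → 𝔽) (F : SkewPoly 𝔽 n) :
    Decomposes S a F (eval S a F) := by
  have hex := exists_decomposes S hS a F
  rw [eval]
  split
  · next h => exact h.choose_spec
  · next h => exact absurd hex h

lemma eval_eq (hS : HasCommRule S σ δ) {a : Fin n → 𝔽} {F : SkewPoly 𝔽 n} {b : 𝔽}
    (h : Decomposes S a F b) : eval S a F = b :=
  (eval_spec S hS a F).unique S h

lemma eval_C (hS : HasCommRule S σ δ) (a : Fin n → 𝔽) (b : 𝔽) :
    eval S a (C n b) = b := eval_eq S hS (decomposes_C S a b)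

lemma eval_zero (hS : HasCommRule S σ δ) (a : Fin n → 𝔽) : eval S a (0 : SkewPoly 𝔽 n) = 0 :=
  eval_eq S hS (decomposes_zero S a)

lemma eval_add (hS : HasCommRule S σ δ) (a : Fin n → 𝔽) (F G : SkewPoly 𝔽 n) :
    eval S a (F + G) = eval S a F + eval S a G :=
  eval_eq S hS ((eval_spec S hS a F).add S (eval_spec S hS a G))

lemma eval_neg (hS : HasCommRule S σ δ) (a : Fin n → 𝔽) (F : SkewPoly 𝔽 n) :
    eval S a (-F) = -eval S a F :=
  eval_eq S hS ((eval_spec S hS a F).neg S)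

lemma eval_sum_pt (hS : HasCommRule S σ δ) (a : Fin n → 𝔽) (G : Fin n → SkewPoly 𝔽 n) :
    eval S a (∑ i : Fin n, S.mul (G i) (X 𝔽 i - C n (a i))) = 0 :=
  eval_eq S hS (decomposes_sum_pt S a G)

lemma eval_mul_left (hS : HasCommRule S σ δ) {a : Fin n → 𝔽} {F : SkewPoly 𝔽 n}
    (h : eval S a F = 0) (H : SkewPoly 𝔽 n) : eval S a (S.mul H F) = 0 := by
  have hd := eval_spec S hS a F
  rw [h] at hd
  obtain ⟨G, hG⟩ := hd
  rw [C_zero, add_zero] at hG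
  rw [hG, mulSum, Finset.sum_congr rfl fun i _ => (S.mul_assoc H (G i) _).symm]
  exact eval_sum_pt S hS a _

lemma conj_key (hS : HasCommRule S σ δ) (a : Fin n → 𝔽) {c : 𝔽} (hc : c ≠ 0) (j : Fin n) :
    S.mul (X 𝔽 j - C n (conj σ δ a c j)) (C n c)
      = ∑ k : Fin n, S.mul (C n (σ c j k)) (X 𝔽 k - C n (a k)) := by
  rw [subMul, hS j c, CmulC]
  have hcc : conj σ δ a c j * c = (σ c *ᵥ a) j + δ c j := by
    show ((σ c *ᵥ a) j * c⁻¹ + δ c j * c⁻¹) * c = _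
    rw [add_mul, mul_assoc, mul_assoc, inv_mul_cancel₀ hc, mul_one, mul_one]
  have hrhs : ∀ k : Fin n, S.mul (C n (σ c j k)) (X 𝔽 k - C n (a k))
      = Finsupp.single (FreeMonoid.of k) (σ c j k) - C n (σ c j k * a k) := by
    intro k
    rw [S.const_mul, smul_sub, smul_C, X, Finsupp.smul_single, smul_eq_mul, mul_one]
  rw [Finset.sum_congr rfl fun k _ => hrhs k, Finset.sum_sub_distrib, ← C_sum]
  have hv : (σ c *ᵥ a) j = ∑ k : Fin n, σ c j k * a k := by
    simp [Matrix.mulVec, dotProduct]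
  rw [hcc, hv, C_add]
  abel

lemma eval_mul_C (hS : HasCommRule S σ δ) (a : Fin n → 𝔽) {c : 𝔽} (hc : c ≠ 0)
    (F : SkewPoly 𝔽 n) :
    eval S a (S.mul F (C n c)) = eval S (conj σ δ a c) F * c := by
  obtain ⟨G, hG⟩ := eval_spec S hS (conj σ δ a c) F
  refine eval_eq S hS ?_
  refine ⟨fun k => ∑ j : Fin n, S.mul (G j) (C n (σ c j k)), ?_⟩
  conv_lhs => rw [hG]
  rw [S.add_mul, sumMul, CmulC]
  congr 1
  calc ∑ j : Fin n, S.mul (S.mul (G j) (X 𝔽 j - C n (conj σ δ a c j))) (C n c)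
      = ∑ j : Fin n, ∑ k : Fin n, S.mul (S.mul (G j) (C n (σ c j k))) (X 𝔽 k - C n (a k)) := by
        refine Finset.sum_congr rfl fun j _ => ?_
        rw [S.mul_assoc, conj_key S hS a hc j, mulSum]
        exact Finset.sum_congr rfl fun k _ => (S.mul_assoc _ _ _).symm
    _ = ∑ k : Fin n, S.mul (∑ j : Fin n, S.mul (G j) (C n (σ c j k))) (X 𝔽 k - C n (a k)) := by
        rw [Finset.sum_comm]
        exact Finset.sum_congr rfl fun k _ => (sumMul S _ _ _).symm

lemma eval_mul_eval (hS : HasCommRule S σ δ) (a : Fin n → 𝔽) (F G : SkewPoly 𝔽 n) :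
    eval S a (S.mul F G) = eval S a (S.mul F (C n (eval S a G))) := by
  obtain ⟨H, hH⟩ := eval_spec S hS a G
  conv_lhs => rw [hH]
  rw [S.mul_add, eval_add S hS, eval_mul_left S hS (eval_sum_pt S hS a H) F, zero_add]

end Helpers3
section MainImpls

variable {𝔽 : Type*} [DivisionRing 𝔽] {n : ℕ} (S : RawMul 𝔽 n)
variable {σ : 𝔽 → Matrix (Fin n) (Fin n) 𝔽} {δ : 𝔽 → Fin n → 𝔽}

lemma mem_pClosure_of_mem (Ω : Set (Fin n → 𝔽)) {a : Fin n → 𝔽} (ha : a ∈ Ω) :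
    a ∈ pClosure S Ω := fun F hF => hF a ha

lemma four_to_two (hS : HasCommRule S σ δ) (Ω : Set (Fin n → 𝔽))
    (h4 : ∀ a ∈ Ω, ∀ c : 𝔽, c ≠ 0 → conj σ δ a c ∈ pClosure S Ω) :
    ∀ F ∈ zeroIdeal S Ω, ∀ c : 𝔽, S.mul F (C n c) ∈ zeroIdeal S Ω := by
  intro F hF c a ha
  by_cases hc : c = 0
  · rw [hc, C_zero, mulZero]
    exact eval_zero S hS a
  · show eval S a (S.mul F (C n c)) = 0
    rw [eval_mul_C S hS a hc F, h4 a ha c hc F hF, zero_mul]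

lemma two_to_one (hS : HasCommRule S σ δ) (Ω : Set (Fin n → 𝔽))
    (h2 : ∀ F ∈ zeroIdeal S Ω, ∀ c : 𝔽, S.mul F (C n c) ∈ zeroIdeal S Ω) :
    IsTwoSidedIdealSet S (zeroIdeal S Ω) := by
  refine ⟨fun a ha => eval_zero S hS a, ?_, ?_, ?_, ?_⟩
  · intro F hF G hG a ha
    show eval S a (F + G) = 0
    rw [eval_add S hS, hF a ha, hG a ha, add_zero]
  · intro F hF a ha
    show eval S a (-F) = 0
    rw [eval_neg S hS, hF a ha, neg_zero]
  · intro F hF G a ha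
    exact eval_mul_left S hS (hF a ha) G
  · intro F hF G a ha
    show eval S a (S.mul F G) = 0
    rw [eval_mul_eval S hS a F G]
    exact h2 F hF (eval S a G) a ha

end MainImpls
end SkewPoly

open SkewPoly

/-- TFAE: (1) `I(Ω)` is a two-sided ideal; (2) `I(Ω)` is closed under
right multiplication by constants; (3) the P-closure of `Ω` is closed under conjugation;
(4) conjugates of points of `Ω` lie in the P-closure. In particular `I(𝔽ⁿ)` is two-sided. -/
theorem stmt6 {𝔽 : Type*} [DivisionRing 𝔽] {n : ℕ} (hn : 0 < n)
    (σ : 𝔽 → Matrix (Fin n) (Fin n) 𝔽) (δ : 𝔽 → Fin n → 𝔽)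
    (hσ : IsMatrixMorphism σ) (hδ : IsVectorDerivation σ δ)
    (S : RawMul 𝔽 n) (hS : HasCommRule S σ δ)
    (Ω : Set (Fin n → 𝔽)) :
    [IsTwoSidedIdealSet S (zeroIdeal S Ω),
      ∀ F ∈ zeroIdeal S Ω, ∀ c : 𝔽, S.mul F (C n c) ∈ zeroIdeal S Ω,
      ∀ a ∈ pClosure S Ω, ∀ c : 𝔽, c ≠ 0 → conj σ δ a c ∈ pClosure S Ω,
      ∀ a ∈ Ω, ∀ c : 𝔽, c ≠ 0 → conj σ δ a c ∈ pClosure S Ω].TFAE ∧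
    IsTwoSidedIdealSet S (zeroIdeal S (Set.univ : Set (Fin n → 𝔽))) := by
  have h12 : IsTwoSidedIdealSet S (zeroIdeal S Ω) →
      ∀ F ∈ zeroIdeal S Ω, ∀ c : 𝔽, S.mul F (C n c) ∈ zeroIdeal S Ω :=
    fun h F hF c => h.2.2.2.2 F hF (C n c)
  have h23 : (∀ F ∈ zeroIdeal S Ω, ∀ c : 𝔽, S.mul F (C n c) ∈ zeroIdeal S Ω) →
      ∀ a ∈ pClosure S Ω, ∀ c : 𝔽, c ≠ 0 → conj σ δ a c ∈ pClosure S Ω := by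
    intro h2 a ha c hc F hF
    have h0 := ha _ (h2 F hF c)
    rw [eval_mul_C S hS a hc F] at h0
    exact (mul_eq_zero.mp h0).resolve_right hc
  refine ⟨?_, two_to_one S hS _
    (four_to_two S hS _ (fun a _ c _ F hF => hF _ (Set.mem_univ _)))⟩
  tfae_have 1 → 2 := h12
  tfae_have 2 → 3 := h23
  tfae_have 3 → 4 := fun h3 a ha => h3 a (mem_pClosure_of_mem S Ω ha)
  tfae_have 4 → 2 := four_to_two S hS Ω
  tfae_have 2 → 1 := two_to_one S hS Ω
  tfae_finish
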